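/- With respect to the uniform probability measure on the simplex, exp(n·H(λ/n)) · ∫_{Δ_{d−1}} s^λ ds ≥ (n+d)^{−d} for any partition λ of n into at most d nonnegative integer parts. -/

import Mathlib

open Finset

namespace SimplexAux

/-- terms of the binomial expansion of `(d+n)^(n+d)` -/
def f (d n k : ℕ) : ℕ := (n+d).choose k * d^k * n^(n+d-k)

lemma step_up (d n : ℕ) (hn : 1 ≤ n) {k : ℕ} (hk : k < d) :
    f d n k ≤ f d n (k+1) := by
  have h1 : (n+d).choose (k+1) * (k+1) = (n+d).choose k * (n+d-k) :=
    Nat.choose_succ_right_eq _ _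
  have hkd : k ≤ d := le_of_lt hk
  have hnd : n ≤ n + d - k := by omega
  -- multiply both sides by (k+1) * n and compare
  have key : f d n k * ((k+1) * n) ≤ f d n (k+1) * ((k+1) * n) := by
    have e2 : f d n (k+1) * ((k+1) * n) =
        (n+d).choose k * (n+d-k) * d^(k+1) * n^(n+d-k) := by
      unfold f
      have : n + d - (k+1) + 1 = n + d - k := by omega
      calc (n+d).choose (k+1) * d^(k+1) * n^(n+d-(k+1)) * ((k+1) * n)
          = ((n+d).choose (k+1) * (k+1)) * d^(k+1) * (n^(n+d-(k+1)) * n) := by ring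
        _ = ((n+d).choose k * (n+d-k)) * d^(k+1) * n^(n+d-k) := by
              rw [h1, ← this, pow_succ, pow_succ]
    have e1 : f d n k * ((k+1) * n) =
        (n+d).choose k * ((k+1) * n) * d^k * n^(n+d-k) := by unfold f; ring
    rw [e1, e2]
    have hle : (k+1) * n ≤ (n+d-k) * d := by
      calc (k+1) * n ≤ d * (n+d-k) := Nat.mul_le_mul (by omega) (by omega)
        _ = (n+d-k) * d := mul_comm _ _
    calc (n+d).choose k * ((k+1)*n) * d^k * n^(n+d-k)
        ≤ (n+d).choose k * ((n+d-k)*d) * d^k * n^(n+d-k) := by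
          exact Nat.mul_le_mul_right _ (Nat.mul_le_mul_right _ (Nat.mul_le_mul_left _ hle))
      _ = (n+d).choose k * (n+d-k) * d^(k+1) * n^(n+d-k) := by rw [pow_succ]; ring
  exact Nat.le_of_mul_le_mul_right key (by positivity)

lemma step_down (d n : ℕ) (hn : 1 ≤ n) {k : ℕ} (hk : d ≤ k) :
    f d n (k+1) ≤ f d n k := by
  by_cases hkm : k < n + d
  · have h1 : (n+d).choose (k+1) * (k+1) = (n+d).choose k * (n+d-k) :=
      Nat.choose_succ_right_eq _ _
    have key : f d n (k+1) * ((k+1) * n) ≤ f d n k * ((k+1) * n) := by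
      have e2 : f d n (k+1) * ((k+1) * n) =
          (n+d).choose k * (n+d-k) * d^(k+1) * n^(n+d-k) := by
        unfold f
        have : n + d - (k+1) + 1 = n + d - k := by omega
        calc (n+d).choose (k+1) * d^(k+1) * n^(n+d-(k+1)) * ((k+1) * n)
            = ((n+d).choose (k+1) * (k+1)) * d^(k+1) * (n^(n+d-(k+1)) * n) := by ring
          _ = ((n+d).choose k * (n+d-k)) * d^(k+1) * n^(n+d-k) := by
                rw [h1, ← this, pow_succ, pow_succ]
      have e1 : f d n k * ((k+1) * n) =
          (n+d).choose k * ((k+1) * n) * d^k * n^(n+d-k) := by unfold f; ring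
      rw [e1, e2]
      have hle : (n+d-k) * d ≤ (k+1) * n := by
        calc (n+d-k) * d ≤ n * (k+1) := Nat.mul_le_mul (by omega) (by omega)
          _ = (k+1) * n := mul_comm _ _
      calc (n+d).choose k * (n+d-k) * d^(k+1) * n^(n+d-k)
          = (n+d).choose k * ((n+d-k)*d) * d^k * n^(n+d-k) := by rw [pow_succ]; ring
        _ ≤ (n+d).choose k * ((k+1)*n) * d^k * n^(n+d-k) := by
            exact Nat.mul_le_mul_right _ (Nat.mul_le_mul_right _ (Nat.mul_le_mul_left _ hle))
    exact Nat.le_of_mul_le_mul_right key (by positivity)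
  · have : (n+d).choose (k+1) = 0 := Nat.choose_eq_zero_of_lt (by omega)
    simp [f, this]

lemma le_fd_of_le (d n : ℕ) (hn : 1 ≤ n) : ∀ j, f d n (d - j) ≤ f d n d := by
  intro j
  induction j with
  | zero => simp
  | succ j ih =>
    by_cases h : d - (j+1) = d - j
    · rw [h]; exact ih
    · have hlt : d - (j+1) < d := by omega
      exact le_trans (by
        have := step_up d n hn (k := d - (j+1)) hlt
        have e : d - (j+1) + 1 = d - j := by omega
        rwa [e] at this) ih

lemma le_fd_of_ge (d n : ℕ) (hn : 1 ≤ n) : ∀ j, f d n (d + j) ≤ f d n d := by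
  intro j
  induction j with
  | zero => simp
  | succ j ih =>
    have := step_down d n hn (k := d + j) (by omega)
    have e : d + j + 1 = d + (j+1) := by omega
    rw [e] at this
    exact le_trans this ih

lemma f_le_fd (d n : ℕ) (hn : 1 ≤ n) (k : ℕ) : f d n k ≤ f d n d := by
  by_cases h : k ≤ d
  · have : k = d - (d - k) := by omega
    rw [this]; exact le_fd_of_le d n hn (d-k)
  · have : k = d + (k - d) := by omega
    rw [this]; exact le_fd_of_ge d n hn (k-d)

lemma key_nat (d n : ℕ) (hn : 1 ≤ n) :
    (n+d)^(n+d) ≤ d^d * n^n * (n+d+1)^(d+1) := by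
  have expand : (n+d)^(n+d) = ∑ k ∈ range (n+d+1), f d n k := by
    have := add_pow (R := ℕ) d n (n+d)
    rw [add_comm d n] at this
    rw [this]
    refine Finset.sum_congr rfl fun k _ => ?_
    simp only [Nat.cast_id]
    unfold f
    ring
  have hsum : ∑ k ∈ range (n+d+1), f d n k ≤ (n+d+1) * f d n d := by
    have := Finset.sum_le_card_nsmul (range (n+d+1)) (f d n) (f d n d)
      (fun k _ => f_le_fd d n hn k)
    simpa [Finset.card_range, smul_eq_mul] using this
  have hfd : f d n d ≤ (n+d)^d * (d^d * n^n) := by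
    unfold f
    have h1 : (n+d).choose d ≤ (n+d)^d :=
      le_trans (Nat.choose_le_descFactorial _ _) (Nat.descFactorial_le_pow _ _)
    have h2 : n + d - d = n := by omega
    rw [h2]
    calc (n+d).choose d * d^d * n^n ≤ (n+d)^d * d^d * n^n :=
          Nat.mul_le_mul_right _ (Nat.mul_le_mul_right _ h1)
      _ = (n+d)^d * (d^d * n^n) := by ring
  calc (n+d)^(n+d) = ∑ k ∈ range (n+d+1), f d n k := expand
    _ ≤ (n+d+1) * f d n d := hsum
    _ ≤ (n+d+1) * ((n+d)^d * (d^d * n^n)) := Nat.mul_le_mul_left _ hfd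
    _ ≤ (n+d+1) * ((n+d+1)^d * (d^d * n^n)) := by
        exact Nat.mul_le_mul_left _ (Nat.mul_le_mul_right _ (Nat.pow_le_pow_left (by omega) _))
    _ = d^d * n^n * (n+d+1)^(d+1) := by ring

end SimplexAux

open Real Finset MeasureTheory
open scoped Pointwise

/-- With respect to the uniform probability measure on the probability simplex in `ℝ^{d+1}`
(parametrized by its first `d` coordinates, Lebesgue measure normalized to mass one),
`exp(n·H(λ/n)) · ∫ s^λ ds ≥ (n + (d+1))^{-(d+1)}` for any partition `λ` of `n`
into at most `d+1` nonnegative integer parts. -/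
theorem exp_entropy_mul_simplex_moment_ge (d n : ℕ) (hn : 0 < n)
    (lam : Fin (d + 1) → ℕ) (hsum : ∑ i, lam i = n) :
    Real.exp (n * (-∑ i, ((lam i : ℝ) / n) * Real.log ((lam i : ℝ) / n))) *
      ((∫ y in {y : Fin d → ℝ | (∀ i, 0 ≤ y i) ∧ ∑ i, y i ≤ 1},
          (∏ i : Fin d, y i ^ lam i.castSucc) * (1 - ∑ i, y i) ^ lam (Fin.last d)) /
        (MeasureTheory.volume {y : Fin d → ℝ | (∀ i, 0 ≤ y i) ∧ ∑ i, y i ≤ 1}).toReal)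
    ≥ (((n : ℝ) + (d + 1)) ^ (d + 1))⁻¹ := by
  have hn0 : (0:ℝ) < n := by exact_mod_cast hn
  set S : Set (Fin d → ℝ) := {y | (∀ i, 0 ≤ y i) ∧ ∑ i, y i ≤ 1} with hS_def
  set F : (Fin d → ℝ) → ℝ :=
    fun y => (∏ i : Fin d, y i ^ lam i.castSucc) * (1 - ∑ i, y i) ^ lam (Fin.last d)
    with hF_def
  set P : ℝ := ∏ i : Fin (d+1), ((lam i : ℝ)/n)^(lam i) with hP_def
  have hPfac : ∀ i : Fin (d+1), 0 < ((lam i : ℝ)/n)^(lam i) := by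
    intro i
    rcases Nat.eq_zero_or_pos (lam i) with h|h
    · simp [h]
    · have hpos : (0:ℝ) < (lam i : ℝ)/n := div_pos (by exact_mod_cast h) hn0
      positivity
  have hP : 0 < P := Finset.prod_pos (fun i _ => hPfac i)
  have hexp : Real.exp (n * (-∑ i, ((lam i : ℝ) / n) * Real.log ((lam i : ℝ) / n))) = P⁻¹ := by
    have h1 : (n:ℝ) * (-∑ i, ((lam i : ℝ) / n) * Real.log ((lam i : ℝ) / n))
        = -∑ i : Fin (d+1), Real.log ((((lam i : ℝ))/n)^(lam i)) := by
      rw [mul_neg, Finset.mul_sum, neg_inj]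
      refine Finset.sum_congr rfl fun i _ => ?_
      rw [Real.log_pow, ← mul_assoc]
      rw [mul_div_cancel₀ _ hn0.ne']
    rw [h1, ← Real.log_prod (fun i _ => (hPfac i).ne'), ← hP_def,
      Real.exp_neg, Real.exp_log hP]
  rcases Nat.eq_zero_or_pos d with hd0 | hd
  · -- degenerate case d = 0
    subst hd0
    have hSuniv : S = Set.univ := by
      ext y
      simp only [hS_def, Set.mem_setOf_eq, Set.mem_univ, iff_true]
      exact ⟨fun i => i.elim0, by simp⟩
    have hvol : volume (Set.univ : Set (Fin 0 → ℝ)) = 1 := by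
      rw [MeasureTheory.volume_pi, Measure.pi_univ]
      simp
    have hF1 : ∀ y, F y = 1 := by
      intro y
      simp [hF_def]
    have hint : (∫ y in S, F y) = 1 := by
      rw [hSuniv]
      simp only [hF1]
      rw [MeasureTheory.integral_const]
      rw [Measure.restrict_univ, measureReal_def, hvol]
      simp
    have hlam : lam 0 = n := by
      rw [← hsum, Fin.sum_univ_one]
    have hPone : P = 1 := by
      rw [hP_def, Fin.prod_univ_one, hlam, div_self hn0.ne']
      simp
    rw [ge_iff_le, hexp, hint, hSuniv, hvol, hPone]
    norm_num
    rw [inv_le_one_iff₀]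
    right
    linarith
  · -- main case 1 ≤ d
    have hd0 : (0:ℝ) < d := by exact_mod_cast hd
    have hnd : (0:ℝ) < (n:ℝ) + d := by positivity
    set ε : ℝ := d / ((n:ℝ) + d) with hε_def
    have hε0 : 0 < ε := div_pos hd0 hnd
    have hε1 : 1 - ε = (n:ℝ) / ((n:ℝ) + d) := by
      rw [hε_def]
      field_simp
      ring
    have h1ε : 0 < 1 - ε := by rw [hε1]; positivity
    set L : ℕ := lam (Fin.last d) with hL_def
    have hsumR : ∑ i : Fin (d+1), ((lam i : ℝ)) = (n:ℝ) := by exact_mod_cast hsum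
    have hL : ∑ i : Fin d, (lam i.castSucc : ℝ) = (n:ℝ) - L := by
      rw [Fin.sum_univ_castSucc] at hsumR
      rw [← hL_def] at hsumR
      linarith
    have hLn : (L:ℝ) ≤ n := by
      have h0 : (0:ℝ) ≤ ∑ i : Fin d, (lam i.castSucc : ℝ) :=
        Finset.sum_nonneg fun i _ => by positivity
      linarith
    set a : Fin d → ℝ := fun i => (1-ε) * (lam i.castSucc : ℝ) / n with ha_def
    have ha_nonneg : ∀ i, 0 ≤ a i := fun i => by
      rw [ha_def]; positivity
    have hsuma : ∑ i, a i = (1-ε) * ((n:ℝ) - L) / n := by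
      rw [ha_def, ← hL]
      rw [← Finset.sum_div, ← Finset.mul_sum]
    -- topological facts about S
    have hS_closed : IsClosed S := by
      have h1 : IsClosed {y : Fin d → ℝ | ∀ i, 0 ≤ y i} := by
        rw [Set.setOf_forall]
        exact isClosed_iInter fun i => isClosed_le continuous_const (continuous_apply i)
      have h2 : IsClosed {y : Fin d → ℝ | ∑ i, y i ≤ 1} :=
        isClosed_le (continuous_finset_sum _ fun i _ => continuous_apply i) continuous_const
      have : S = {y : Fin d → ℝ | ∀ i, 0 ≤ y i} ∩ {y : Fin d → ℝ | ∑ i, y i ≤ 1} := rfl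
      rw [this]
      exact h1.inter h2
    have hS_sub_Icc : S ⊆ Set.Icc 0 1 := by
      rintro y ⟨h0, h1⟩
      refine ⟨fun i => h0 i, fun i => ?_⟩
      calc y i ≤ ∑ j, y j := Finset.single_le_sum (fun j _ => h0 j) (Finset.mem_univ i)
        _ ≤ 1 := h1
    have hS_cpt : IsCompact S :=
      IsCompact.of_isClosed_subset isCompact_Icc hS_closed hS_sub_Icc
    have hS_meas : MeasurableSet S := hS_closed.measurableSet
    have hS_lt : volume S < ⊤ := hS_cpt.measure_lt_top
    have hV_pos : 0 < (volume S).toReal := by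
      have hbox : Set.Icc (0 : Fin d → ℝ) (fun _ => (d:ℝ)⁻¹) ⊆ S := by
        rintro y ⟨hy0, hy1⟩
        refine ⟨fun i => hy0 i, ?_⟩
        calc ∑ i, y i ≤ ∑ _i : Fin d, (d:ℝ)⁻¹ := Finset.sum_le_sum fun i _ => hy1 i
          _ = 1 := by
              rw [Finset.sum_const, Finset.card_univ, Fintype.card_fin, nsmul_eq_mul]
              field_simp
      have hb : 0 < volume (Set.Icc (0 : Fin d → ℝ) (fun _ => (d:ℝ)⁻¹)) := by
        rw [Real.volume_Icc_pi]
        refine CanonicallyOrderedAdd.prod_pos.mpr fun i _ => ?_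
        simp only [Pi.zero_apply, sub_zero]
        exact ENNReal.ofReal_pos.mpr (by positivity)
      have hpos : 0 < volume S := lt_of_lt_of_le hb (measure_mono hbox)
      exact ENNReal.toReal_pos hpos.ne' hS_lt.ne
    have hF_cont : Continuous F := by
      apply Continuous.mul
      · exact continuous_finset_prod _ fun i _ => (continuous_apply i).pow _
      · exact (continuous_const.sub (continuous_finset_sum _ fun i _ => continuous_apply i)).pow _
    have hF_int : IntegrableOn F S :=
      ContinuousOn.integrableOn_compact hS_cpt hF_cont.continuousOn
    have hF_nonneg : ∀ y ∈ S, 0 ≤ F y := by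
      rintro y ⟨h0, h1⟩
      apply mul_nonneg
      · exact Finset.prod_nonneg fun i _ => pow_nonneg (h0 _) _
      · exact pow_nonneg (by linarith) _
    -- the shrunken simplex
    set R : Set (Fin d → ℝ) := a +ᵥ ε • S with hR_def
    have hR_prop : ∀ y ∈ R, (∀ i, a i ≤ y i) ∧ (1-ε) * L / n ≤ 1 - ∑ i, y i := by
      intro y hy
      rw [hR_def] at hy
      obtain ⟨w, hw, rfl⟩ := hy
      obtain ⟨z, hz, rfl⟩ := hw
      obtain ⟨hz0, hz1⟩ := hz
      have hyi : ∀ i, (fun x => a +ᵥ x) ((fun x => ε • x) z) i = a i + ε * z i :=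
        fun i => rfl
      constructor
      · intro i
        rw [hyi i]
        exact le_add_of_nonneg_right (mul_nonneg hε0.le (hz0 i))
      · have hsumy : ∑ i, (fun x => a +ᵥ x) ((fun x => ε • x) z) i
            = (∑ i, a i) + ε * ∑ i, z i := by
          simp only [hyi]
          rw [Finset.sum_add_distrib, Finset.mul_sum]
        rw [hsumy, hsuma]
        have hkey : (1-ε) * ((n:ℝ) - L) / n + (1-ε) * L / n = 1 - ε := by
          field_simp
          ring
        have hz1' : ε * ∑ i, z i ≤ ε * 1 := mul_le_mul_of_nonneg_left hz1 hε0.le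
        linarith
    have hR_sub : R ⊆ S := by
      intro y hy
      obtain ⟨h1, h2⟩ := hR_prop y hy
      refine ⟨fun i => le_trans (ha_nonneg i) (h1 i), ?_⟩
      have : 0 ≤ (1-ε) * L / n := by positivity
      linarith
    have hR_lb : ∀ y ∈ R, (1-ε)^n * P ≤ F y := by
      intro y hy
      obtain ⟨h1, h2⟩ := hR_prop y hy
      have hprod : (∏ i : Fin d, (a i) ^ lam i.castSucc) ≤ ∏ i : Fin d, (y i) ^ lam i.castSucc := by
        refine Finset.prod_le_prod (fun i _ => pow_nonneg (ha_nonneg i) _) (fun i _ => ?_)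
        exact pow_le_pow_left₀ (ha_nonneg i) (h1 i) _
      have hlast : ((1-ε) * L / n) ^ L ≤ (1 - ∑ i, y i) ^ L := by
        refine pow_le_pow_left₀ (by positivity) h2 _
      have hmul : (∏ i : Fin d, (a i) ^ lam i.castSucc) * ((1-ε) * L / n) ^ L ≤ F y := by
        rw [hF_def]
        refine mul_le_mul hprod hlast (by positivity) ?_
        exact Finset.prod_nonneg fun i _ => pow_nonneg (le_trans (ha_nonneg i) (h1 i)) _
      refine le_trans (le_of_eq ?_) hmul
      have hrec : (∏ i : Fin d, (a i) ^ lam i.castSucc) * ((1-ε) * L / n) ^ L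
          = ∏ i : Fin (d+1), ((1-ε) * (lam i : ℝ) / n) ^ lam i := by
        rw [Fin.prod_univ_castSucc (f := fun i : Fin (d+1) => ((1-ε) * (lam i : ℝ) / n) ^ lam i)]
      rw [hrec]
      have hfac : ∀ i : Fin (d+1), ((1-ε) * (lam i : ℝ) / n) ^ lam i
          = (1-ε)^(lam i) * ((lam i : ℝ)/n)^(lam i) := by
        intro i
        rw [mul_div_assoc, mul_pow]
      rw [Finset.prod_congr rfl (fun i _ => hfac i), Finset.prod_mul_distrib,
        Finset.prod_pow_eq_pow_sum, hsum, hP_def]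
    have hR_meas : MeasurableSet R := (hS_meas.const_smul₀ ε).const_vadd a
    have hRvol : volume R = ENNReal.ofReal (ε^d) * volume S := by
      rw [hR_def, measure_vadd, Measure.addHaar_smul]
      congr 2
      rw [abs_of_nonneg (by positivity)]
      congr 1
      rw [Module.finrank_pi, Fintype.card_fin]
    have hR_fin : volume R ≠ ⊤ := ((measure_mono hR_sub).trans_lt hS_lt).ne
    have hI1 : (1-ε)^n * P * (volume R).toReal ≤ ∫ y in R, F y :=
      setIntegral_ge_of_const_le_real hR_meas hR_fin hR_lb (hF_int.mono_set hR_sub)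
    have hI2 : (∫ y in R, F y) ≤ ∫ y in S, F y :=
      setIntegral_mono_set hF_int (ae_restrict_of_forall_mem hS_meas hF_nonneg)
        (HasSubset.Subset.eventuallyLE hR_sub)
    have hRvol' : (volume R).toReal = ε^d * (volume S).toReal := by
      rw [hRvol, ENNReal.toReal_mul, ENNReal.toReal_ofReal (by positivity)]
    have hIlb : (1-ε)^n * P * ε^d * (volume S).toReal ≤ ∫ y in S, F y := by
      have := le_trans hI1 hI2
      rw [hRvol'] at this
      calc (1-ε)^n * P * ε^d * (volume S).toReal
          = (1-ε)^n * P * (ε^d * (volume S).toReal) := by ring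
        _ ≤ ∫ y in S, F y := this
    rw [ge_iff_le, hexp]
    have hstep : (1-ε)^n * ε^d ≤ P⁻¹ * ((∫ y in S, F y) / (volume S).toReal) := by
      have h3 : (1-ε)^n * ε^d
          = P⁻¹ * (((1-ε)^n * P * ε^d * (volume S).toReal) / (volume S).toReal) := by
        field_simp
      rw [h3]
      gcongr
    refine le_trans ?_ hstep
    -- final arithmetic inequality
    have hkey := SimplexAux.key_nat d n hn
    have hkeyR : ((n:ℝ)+d)^(n+d) ≤ (d:ℝ)^d * (n:ℝ)^n * ((n:ℝ)+d+1)^(d+1) := by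
      exact_mod_cast hkey
    have hrw : (1-ε)^n * ε^d = ((n:ℝ)^n * (d:ℝ)^d) / (((n:ℝ)+d)^(n+d)) := by
      rw [hε1, hε_def, div_pow, div_pow, div_mul_div_comm, ← pow_add]
    rw [hrw]
    have hcast : ((n:ℝ) + ((d:ℝ) + 1)) = ((n:ℝ)+d+1) := by ring
    rw [hcast]
    rw [le_div_iff₀ (by positivity), inv_mul_le_iff₀ (by positivity)]
    refine le_trans hkeyR (le_of_eq (by ring))
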